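/- Let (X,d) be a compact metric space and f : X → X continuous. A closed nonempty set Λ ⊆ X is internally chain transitive if and only if Λ is the ω-limit set of some asymptotic pseudo-orbit of f in X. -/

import Mathlib

open Filter Topology

def InternallyChainTransitive {X : Type*} [MetricSpace X] (f : X → X) (Λ : Set X) : Prop :=
  ∀ x ∈ Λ, ∀ y ∈ Λ, ∀ ε : ℝ, 0 < ε → ∃ m : ℕ, 1 ≤ m ∧ ∃ σ : ℕ → X,
    σ 0 = x ∧ σ m = y ∧ (∀ i ≤ m, σ i ∈ Λ) ∧ ∀ i < m, dist (f (σ i)) (σ (i + 1)) < ε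

theorem ict_iff_omegaLimit_of_asymptotic_pseudo_orbit {X : Type*} [MetricSpace X]
    [CompactSpace X] (f : X → X) (hf : Continuous f) (Λ : Set X)
    (hΛc : IsClosed Λ) (hne : Λ.Nonempty) :
    InternallyChainTransitive f Λ ↔
      ∃ σ : ℕ → X, Tendsto (fun n => dist (f (σ n)) (σ (n + 1))) atTop (𝓝 0) ∧
        Λ = ⋂ k : ℕ, closure (σ '' Set.Ici k) := by
  constructor
  · -- Forward direction
    intro hict
    have : Nonempty Λ := hne.to_subtype
    obtain ⟨u, hu⟩ := TopologicalSpace.exists_dense_seq ↥Λ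
    set p : ℕ → X := fun j => (u j : X) with hp
    have hpΛ : ∀ j, p j ∈ Λ := fun j => (u j).2
    set q : ℕ → X := fun n => p (Nat.unpair n).1 with hq
    have hqΛ : ∀ n, q n ∈ Λ := fun n => hpΛ _
    have h : ∀ n : ℕ, ∃ m : ℕ, ∃ s : ℕ → X, 1 ≤ m ∧ s 0 = q n ∧ s m = q (n+1) ∧
        (∀ i ≤ m, s i ∈ Λ) ∧ ∀ i < m, dist (f (s i)) (s (i+1)) < 1/(n+1) := by
      intro n
      have hpos : (0:ℝ) < 1/(n+1) := by positivity
      obtain ⟨m, hm, s, hs⟩ := hict (q n) (hqΛ n) (q (n+1)) (hqΛ (n+1)) (1/(n+1)) hpos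
      exact ⟨m, s, hm, hs.1, hs.2.1, hs.2.2.1, hs.2.2.2⟩
    choose m s hm hs0 hsm hmem hd using h
    set S : ℕ → ℕ := fun n => ∑ i ∈ Finset.range n, m i with hS
    have hS0 : S 0 = 0 := by simp [hS]
    have hSsucc : ∀ n, S (n+1) = S n + m n := fun n => Finset.sum_range_succ _ _
    have hSle : ∀ n, n ≤ S n := by
      intro n
      induction n with
      | zero => simp [hS0]
      | succ k ih => rw [hSsucc]; have := hm k; omega
    have hSmono : StrictMono S := strictMono_nat_of_lt_succ (by
      intro n; rw [hSsucc]; have := hm n; omega)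
    set idx : ℕ → ℕ := fun k => Nat.findGreatest (fun n => S n ≤ k) k with hidxdef
    have hidx1 : ∀ k, S (idx k) ≤ k := by
      intro k
      exact Nat.findGreatest_spec (P := fun n => S n ≤ k) (Nat.zero_le k) (by omega)
    have hidx2 : ∀ k, k < S (idx k + 1) := by
      intro k
      by_contra hcon
      push_neg at hcon
      have h1 : idx k + 1 ≤ k := le_trans (hSle _) hcon
      have h3 : idx k + 1 ≤ idx k := Nat.le_findGreatest (P := fun n => S n ≤ k) h1 hcon
      omega
    have hidx3 : ∀ n k, S n ≤ k → k < S (n+1) → idx k = n := by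
      intro n k h1 h2
      have hle : n ≤ idx k := Nat.le_findGreatest (le_trans (hSle n) h1) h1
      have hge : idx k ≤ n := by
        by_contra hcon
        push_neg at hcon
        have h3 : S (n+1) ≤ S (idx k) := hSmono.monotone hcon
        have h4 := hidx1 k
        omega
      omega
    set τ : ℕ → X := fun k => s (idx k) (k - S (idx k)) with hτ
    have hilt : ∀ k, k - S (idx k) < m (idx k) := by
      intro k
      have h1 := hidx1 k
      have h2 := hidx2 k
      rw [hSsucc] at h2
      omega
    have hidxS : ∀ n, idx (S n) = n := by
      intro n
      apply hidx3
      · exact le_refl _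
      · rw [hSsucc]; have := hm n; omega
    have hτS : ∀ n, τ (S n) = q n := by
      intro n
      simp only [hτ, hidxS n, Nat.sub_self]
      exact hs0 n
    have hτΛ : ∀ k, τ k ∈ Λ := fun k => hmem _ _ (le_of_lt (hilt k))
    have hdist : ∀ k, dist (f (τ k)) (τ (k+1)) < 1/(idx k + 1) := by
      intro k
      have h1 := hidx1 k
      have h2 := hidx2 k
      have h2' := hSsucc (idx k)
      have hiltk := hilt k
      rcases Nat.lt_or_ge (k+1) (S (idx k + 1)) with hlt | hge
      · -- k + 1 < S (idx k + 1)
        have hidx' : idx (k+1) = idx k := hidx3 (idx k) (k+1) (by omega) hlt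
        have ht : τ (k+1) = s (idx k) (k - S (idx k) + 1) := by
          simp only [hτ, hidx']
          congr 1
          omega
        rw [ht]
        exact hd _ _ hiltk
      · -- k + 1 = S (idx k + 1)
        have heq : k + 1 = S (idx k + 1) := by omega
        have hτk1 : τ (k+1) = q (idx k + 1) := by rw [heq]; exact hτS _
        have him : k - S (idx k) + 1 = m (idx k) := by
          have := hm (idx k); omega
        have ht : τ (k+1) = s (idx k) (k - S (idx k) + 1) := by
          rw [hτk1, him, hsm]
        rw [ht]
        exact hd _ _ hiltk
    refine ⟨τ, ?_, ?_⟩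
    · -- tendsto
      have hidxtop : Tendsto idx atTop atTop := by
        rw [tendsto_atTop_atTop]
        intro N
        refine ⟨S N, fun k hk => ?_⟩
        exact Nat.le_findGreatest (le_trans (hSle N) hk) hk
      have hg : Tendsto (fun k => (1:ℝ)/(idx k + 1)) atTop (𝓝 0) :=
        tendsto_one_div_add_atTop_nhds_zero_nat.comp hidxtop
      exact squeeze_zero (fun k => dist_nonneg) (fun k => le_of_lt (hdist k)) hg
    · -- Λ = ⋂ closure
      apply Set.Subset.antisymm
      · intro x hx
        rw [Set.mem_iInter]
        intro k
        rw [Metric.mem_closure_iff]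
        intro ε hε
        rw [Metric.denseRange_iff] at hu
        obtain ⟨j, hj⟩ := hu ⟨x, hx⟩ ε hε
        rw [Subtype.dist_eq] at hj
        set n := Nat.pair j k with hnd
        have hk : k ≤ S n := le_trans (Nat.right_le_pair j k) (hSle n)
        refine ⟨τ (S n), Set.mem_image_of_mem _ hk, ?_⟩
        rw [hτS n]
        simpa [hq, hnd, Nat.unpair_pair] using hj
      · intro x hx
        rw [Set.mem_iInter] at hx
        have := hx 0
        have hsub : closure (τ '' Set.Ici 0) ⊆ Λ := by
          rw [← hΛc.closure_eq]
          apply closure_mono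
          rintro - ⟨k, -, rfl⟩
          exact hτΛ k
        exact hsub this
  · -- Backward direction
    rintro ⟨σ, hσt, hΛeq⟩
    -- σ n eventually close to Λ
    have hinf : ∀ δ : ℝ, 0 < δ → ∀ᶠ n in atTop, Metric.infDist (σ n) Λ < δ := by
      intro δ hδ
      by_contra hc
      have hfreq : ∃ᶠ n in atTop, σ n ∈ {x : X | δ ≤ Metric.infDist x Λ} := by
        rw [Filter.not_eventually] at hc
        refine hc.mono fun n hn => ?_
        simpa using le_of_not_gt hn
      set C := {x : X | δ ≤ Metric.infDist x Λ} with hC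
      have hCc : IsClosed C := isClosed_le continuous_const (Metric.continuous_infDist_pt Λ)
      have hnb : (Filter.map σ atTop ⊓ 𝓟 C).NeBot := by
        rw [← frequently_iff_neBot]
        rw [frequently_map]
        exact hfreq
      obtain ⟨x, -, hx⟩ := isCompact_univ.exists_clusterPt (f := Filter.map σ atTop ⊓ 𝓟 C)
        (le_principal_iff.2 Filter.univ_mem)
      have hxC : x ∈ C := by
        rw [← hCc.closure_eq]
        exact mem_closure_iff_clusterPt.2 (hx.mono inf_le_right)
      have hxΛ : x ∈ Λ := by
        rw [hΛeq, Set.mem_iInter]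
        intro k
        apply mem_closure_iff_clusterPt.2
        refine (hx.mono (le_trans inf_le_left ?_))
        rw [le_principal_iff, Filter.mem_map]
        filter_upwards [Filter.eventually_ge_atTop k] with n hn
        exact Set.mem_image_of_mem _ hn
      have := Metric.infDist_zero_of_mem hxΛ
      rw [hC, Set.mem_setOf_eq, this] at hxC
      linarith
    intro x hx y hy ε hε
    -- uniform continuity
    have huc := CompactSpace.uniformContinuous_of_continuous hf
    rw [Metric.uniformContinuous_iff] at huc
    obtain ⟨δ₀, hδ₀, hucδ⟩ := huc (ε/3) (by linarith)
    set δ := min δ₀ (ε/3) with hδdef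
    have hδpos : 0 < δ := lt_min hδ₀ (by linarith)
    have hδε : δ ≤ ε/3 := min_le_right _ _
    have hδf : ∀ a b : X, dist a b < δ → dist (f a) (f b) < ε/3 :=
      fun a b hab => hucδ (lt_of_lt_of_le hab (min_le_left _ _))
    -- choose N
    have hev : ∀ᶠ n in atTop, dist (f (σ n)) (σ (n+1)) < δ ∧ Metric.infDist (σ n) Λ < δ := by
      have h1 : ∀ᶠ n in atTop, dist (f (σ n)) (σ (n+1)) < δ := by
        have := hσt.eventually (eventually_lt_nhds hδpos)
        simpa using this
      exact h1.and (hinf δ hδpos)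
    obtain ⟨N, hN⟩ := eventually_atTop.1 hev
    -- find n₁, n₂
    have hxmem : x ∈ closure (σ '' Set.Ici N) := by
      rw [hΛeq] at hx; exact Set.mem_iInter.1 hx N
    rw [Metric.mem_closure_iff] at hxmem
    obtain ⟨b₁, ⟨n₁, hn₁, rfl⟩, hb₁⟩ := hxmem δ hδpos
    have hymem : y ∈ closure (σ '' Set.Ici (n₁+1)) := by
      rw [hΛeq] at hy; exact Set.mem_iInter.1 hy (n₁+1)
    rw [Metric.mem_closure_iff] at hymem
    obtain ⟨b₂, ⟨n₂, hn₂, rfl⟩, hb₂⟩ := hymem δ hδpos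
    simp only [Set.mem_Ici] at hn₁ hn₂
    -- shadow points
    have hz : ∀ n : ℕ, ∃ w : X, w ∈ Λ ∧ (N ≤ n → dist (σ n) w < δ) := by
      intro n
      by_cases hn : N ≤ n
      · have := (hN n hn).2
        rw [Metric.infDist_lt_iff hne] at this
        obtain ⟨w, hw1, hw2⟩ := this
        exact ⟨w, hw1, fun _ => hw2⟩
      · exact ⟨hne.choose, hne.choose_spec, fun h => absurd h hn⟩
    choose z hz1 hz2 using hz
    set M := n₂ - n₁ with hM
    have hM1 : 1 ≤ M := by omega
    set τ : ℕ → X := fun i => if i = 0 then x else if M ≤ i then y else z (n₁ + i) with hτ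
    have hτM : τ M = y := by
      simp only [hτ]
      rw [if_neg (by omega : ¬ M = 0), if_pos (le_refl M)]
    have hclose : ∀ i ≤ M, dist (τ i) (σ (n₁ + i)) < δ := by
      intro i hi
      rcases Nat.eq_zero_or_pos i with rfl | hipos
      · simpa [hτ] using hb₁
      rcases eq_or_lt_of_le hi with heqi | hilt
      · subst heqi
        have hn₁M : n₁ + M = n₂ := by omega
        rw [hn₁M, hτM]
        exact hb₂
      · simp only [hτ, if_neg (by omega : ¬ i = 0), if_neg (by omega : ¬ M ≤ i)]
        rw [dist_comm]
        exact hz2 (n₁ + i) (by omega)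
    refine ⟨M, hM1, τ, by simp [hτ], hτM, ?_, ?_⟩
    · intro i hi
      rcases Nat.eq_zero_or_pos i with rfl | hipos
      · simpa [hτ] using hx
      rcases eq_or_lt_of_le hi with heqi | hilt
      · subst heqi
        rw [hτM]; exact hy
      · simp only [hτ, if_neg (by omega : ¬ i = 0), if_neg (by omega : ¬ M ≤ i)]
        exact hz1 _
    · intro i hi
      have h1 : dist (τ i) (σ (n₁ + i)) < δ := hclose i (le_of_lt hi)
      have h2 : dist (τ (i+1)) (σ (n₁ + i + 1)) < δ := hclose (i+1) (by omega)
      have h3 : dist (f (τ i)) (f (σ (n₁ + i))) < ε/3 := hδf _ _ h1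
      have h4 : dist (f (σ (n₁ + i))) (σ (n₁ + i + 1)) < δ := (hN (n₁ + i) (by omega)).1
      calc dist (f (τ i)) (τ (i+1))
          ≤ dist (f (τ i)) (f (σ (n₁ + i))) + dist (f (σ (n₁ + i))) (σ (n₁ + i + 1))
            + dist (σ (n₁ + i + 1)) (τ (i+1)) := dist_triangle4 _ _ _ _
        _ < ε/3 + δ + δ := by
            rw [dist_comm (σ (n₁ + i + 1))]
            exact add_lt_add (add_lt_add h3 h4) h2
        _ ≤ ε/3 + ε/3 + ε/3 := by linarith
        _ = ε := by ring
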